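/- Let R be an integral domain, n ≥ 2, m coprime to n, and a, b ∈ R with a ≠ b. Then det C_m(a,b) = ±(ma + (n−m)b)(a−b)^{n−1}. In particular, if C_m(a,b) is invertible over R then ma + (n−m)b ≠ 0. -/

import Mathlib

/-- The `n × n` Christoffel matrix `C_m(a,b)`. -/
def christoffel (n m : ℕ) {R : Type*} (a b : R) : Matrix (Fin n) (Fin n) R :=
  Matrix.of fun i j =>
    if (((i : ℕ) : ZMod n) - (m : ZMod n) * ((j : ℕ) : ZMod n)).val < m then a else b

open Matrix Finset
set_option linter.unusedSectionVars false
set_option maxHeartbeats 1000000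

namespace ChristoffelAux

variable {n : ℕ} [NeZero n] {m : ℕ}

/-- indicator (as an integer vector on `Fin n`) of the residue `x`. -/
def delta (n : ℕ) [NeZero n] (x : ZMod n) : Fin n → ℤ :=
  fun i => if ((i : ℕ) : ZMod n) = x then 1 else 0

/-- indicator column of the Christoffel matrix with column residue `c`. -/
def psi (n m : ℕ) [NeZero n] (c : ZMod n) : Fin n → ℤ :=
  fun i => if (((i : ℕ) : ZMod n) - (m : ZMod n) * c).val < m then 1 else 0

/-- The integer matrix whose determinant controls everything. -/
def Bz (n m : ℕ) [NeZero n] : Matrix (Fin n) (Fin n) ℤ :=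
  Matrix.of fun i j => if j = (0 : Fin n) then 1 else psi n m ((j : ℕ) : ZMod n) i

lemma cast_inj_fin (i j : Fin n) : ((i : ℕ) : ZMod n) = ((j : ℕ) : ZMod n) ↔ i = j := by
  constructor
  · intro h
    have h1 : (((i : ℕ) : ZMod n)).val = (((j : ℕ) : ZMod n)).val := by rw [h]
    rw [ZMod.val_cast_of_lt i.isLt, ZMod.val_cast_of_lt j.isLt] at h1
    exact Fin.ext h1
  · rintro rfl; rfl

def toF (x : ZMod n) : Fin n := ⟨x.val, x.val_lt⟩

lemma cast_toF (x : ZMod n) : (((toF x : Fin n) : ℕ) : ZMod n) = x :=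
  ZMod.natCast_rightInverse x

lemma toF_cast (i : Fin n) : toF (((i : ℕ) : ZMod n)) = i := by
  apply Fin.ext; simp [toF, ZMod.val_cast_of_lt i.isLt]

lemma eq_natCast_iff_val (x : ZMod n) {k : ℕ} (hk : k < n) : x = (k : ZMod n) ↔ x.val = k := by
  constructor
  · rintro rfl; exact ZMod.val_cast_of_lt hk
  · rintro rfl; exact (ZMod.natCast_rightInverse x).symm

lemma psi_eq_sum (hmn : m ≤ n) (c : ZMod n) :
    psi n m c = ∑ k ∈ Finset.range m, delta n ((m : ZMod n) * c + (k : ℕ)) := by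
  funext i
  have hcong : ∀ k ∈ Finset.range m,
      (if ((i : ℕ) : ZMod n) = (m : ZMod n) * c + (k : ℕ) then (1 : ℤ) else 0)
        = (if (((i : ℕ) : ZMod n) - (m : ZMod n) * c).val = k then 1 else 0) := by
    intro k hk
    have hk' : k < n := lt_of_lt_of_le (Finset.mem_range.mp hk) hmn
    have : (((i : ℕ) : ZMod n) = (m : ZMod n) * c + (k : ℕ))
        ↔ ((((i : ℕ) : ZMod n) - (m : ZMod n) * c).val = k) := by
      rw [← eq_natCast_iff_val _ hk', sub_eq_iff_eq_add']
    simp only [this]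
  simp only [Finset.sum_apply, delta]
  rw [Finset.sum_congr rfl hcong, Finset.sum_ite_eq (Finset.range m) _ (fun _ => (1 : ℤ))]
  simp [psi, Finset.mem_range]

lemma delta_sum : ∑ x : ZMod n, delta n x = fun _ => (1 : ℤ) := by
  funext i
  simp only [Finset.sum_apply, delta]
  rw [Finset.sum_ite_eq Finset.univ (((i : ℕ)) : ZMod n) (fun _ => (1 : ℤ))]
  simp

section WithInverse

variable {t : ZMod n} (hmt : (m : ZMod n) * t = 1)
include hmt

lemma mul_bij : Function.Bijective (fun c : ZMod n => (m : ZMod n) * c) := by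
  rw [Function.bijective_iff_has_inverse]
  refine ⟨fun x => t * x, fun c => ?_, fun x => ?_⟩
  · show t * ((m : ZMod n) * c) = c
    rw [← mul_assoc, mul_comm t, hmt, one_mul]
  · show (m : ZMod n) * (t * x) = x
    rw [← mul_assoc, hmt, one_mul]

lemma psi_total (hmn : m ≤ n) :
    ∑ c : ZMod n, psi n m c = (m : ℤ) • (fun _ => (1 : ℤ)) := by
  have h1 : ∑ c : ZMod n, psi n m c
      = ∑ c : ZMod n, ∑ k ∈ Finset.range m, delta n ((m : ZMod n) * c + (k : ℕ)) :=
    Finset.sum_congr rfl fun c _ => psi_eq_sum hmn c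
  rw [h1, Finset.sum_comm]
  have h2 : ∀ k ∈ Finset.range m,
      ∑ c : ZMod n, delta n ((m : ZMod n) * c + (k : ℕ)) = ∑ x : ZMod n, delta n x := by
    intro k _
    have hb2 : Function.Bijective (fun x : ZMod n => x + (k : ℕ)) := by
      rw [Function.bijective_iff_has_inverse]
      exact ⟨fun x => x - (k : ℕ), fun x => by ring_nf, fun x => by ring_nf⟩
    rw [Fintype.sum_bijective _ (mul_bij hmt) _ (fun x => delta n (x + (k:ℕ))) (fun c => rfl)]
    exact Fintype.sum_bijective _ hb2 _ _ (fun x => rfl)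
  rw [Finset.sum_congr rfl h2, Finset.sum_const, Finset.card_range, delta_sum]
  simp [← Nat.cast_smul_eq_nsmul ℤ]

end WithInverse


lemma isUnit_det_Bz (hm : 1 ≤ m) (hmn : m < n) (hc : Nat.Coprime m n) :
    IsUnit (Bz n m).det := by
  classical
  set u : (ZMod n)ˣ := ZMod.unitOfCoprime m hc with hu
  set t : ZMod n := ((u⁻¹ : (ZMod n)ˣ) : ZMod n) with ht
  have hmt : (m : ZMod n) * t = 1 := by
    rw [ht, ← ZMod.coe_unitOfCoprime m hc, ← hu]
    exact u.mul_inv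
  set p : Submodule ℤ (Fin n → ℤ) := LinearMap.range (Matrix.mulVecLin (Bz n m)) with hp
  have hcol : ∀ j : Fin n, (fun i => Bz n m i j) ∈ p := by
    intro j
    refine ⟨Pi.single j 1, ?_⟩
    rw [Matrix.mulVecLin_apply, Matrix.mulVec_single]
    funext i; simp
  have h1 : (fun _ => (1 : ℤ)) ∈ p := by
    have := hcol 0
    simpa [Bz] using this
  have hpsine : ∀ c : ZMod n, c ≠ 0 → psi n m c ∈ p := by
    intro c hc0
    have hne : (toF c : Fin n) ≠ 0 := by
      intro h
      apply hc0
      rw [← cast_toF c, h]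
      simp
    have := hcol (toF c)
    simp only [Bz, Matrix.of_apply, if_neg hne, cast_toF] at this
    exact this
  have hpsi : ∀ c : ZMod n, psi n m c ∈ p := by
    intro c
    by_cases hc0 : c = 0
    · subst hc0
      have hsum := psi_total hmt hmn.le
      have he : psi n m 0 = (m : ℤ) • (fun _ => (1 : ℤ)) - ∑ c ∈ Finset.univ.erase (0 : ZMod n), psi n m c := by
        rw [← hsum]
        exact eq_sub_of_add_eq (Finset.add_sum_erase _ _ (Finset.mem_univ 0))
      rw [he]
      exact p.sub_mem (p.smul_mem _ h1) (Submodule.sum_mem _ fun c hcmem => hpsine c (Finset.ne_of_mem_erase hcmem))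
    · exact hpsine c hc0
  have hpsix : ∀ x : ZMod n, psi n m (t * x) = ∑ k ∈ Finset.range m, delta n (x + (k : ℕ)) := by
    intro x
    rw [psi_eq_sum hmn.le]
    refine Finset.sum_congr rfl fun k _ => ?_
    congr 1
    rw [← mul_assoc, hmt, one_mul]
  have hdelta1 : ∀ x : ZMod n, delta n x - delta n (x + (m : ZMod n)) ∈ p := by
    intro x
    have e1 := hpsix x
    have e2 : psi n m (t * x + t) = ∑ k ∈ Finset.range m, delta n ((x + 1) + (k : ℕ)) := by
      rw [psi_eq_sum hmn.le]
      refine Finset.sum_congr rfl fun k _ => ?_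
      congr 1
      rw [mul_add, ← mul_assoc, hmt, one_mul]
    have h3 : (∑ k ∈ Finset.range m, delta n (x + (k : ℕ))) + delta n (x + (m : ZMod n))
        = ∑ k ∈ Finset.range (m + 1), delta n (x + (k : ℕ)) := by
      rw [Finset.sum_range_succ]
    have h4 : delta n x + ∑ k ∈ Finset.range m, delta n ((x + 1) + (k : ℕ))
        = ∑ k ∈ Finset.range (m + 1), delta n (x + (k : ℕ)) := by
      rw [Finset.sum_range_succ']
      rw [add_comm]
      congr 1
      · refine Finset.sum_congr rfl fun k _ => ?_
        congr 1
        push_cast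
        ring
      · congr 1
        push_cast
        ring
    have key : psi n m (t * x) - psi n m (t * x + t)
        = delta n x - delta n (x + (m : ZMod n)) := by
      rw [e1, e2]
      exact sub_eq_sub_iff_add_eq_add.mpr (h3.trans h4.symm)
    rw [← key]
    exact p.sub_mem (hpsi _) (hpsi _)
  have hdelta2 : ∀ (k : ℕ) (x : ZMod n), delta n x - delta n (x + (k : ℕ) * (m : ZMod n)) ∈ p := by
    intro k
    induction k with
    | zero => intro x; simpa using p.zero_mem
    | succ k ih =>
      intro x
      have harg : (x + (k : ℕ) * (m : ZMod n)) + (m : ZMod n) = x + ((k + 1 : ℕ) : ZMod n) * (m : ZMod n) := by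
        push_cast; ring
      have : delta n x - delta n (x + ((k + 1 : ℕ) : ZMod n) * (m : ZMod n))
          = (delta n x - delta n (x + (k : ℕ) * (m : ZMod n)))
            + (delta n (x + (k : ℕ) * (m : ZMod n)) - delta n ((x + (k : ℕ) * (m : ZMod n)) + (m : ZMod n))) := by
        rw [harg]; abel
      rw [this]
      exact p.add_mem (ih x) (hdelta1 _)
  have hdelta3 : ∀ x y : ZMod n, delta n x - delta n y ∈ p := by
    intro x y
    have hxy : x + (((t * (y - x)).val : ℕ) : ZMod n) * (m : ZMod n) = y := by
      rw [ZMod.natCast_rightInverse _]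
      linear_combination (y - x) * hmt
    have := hdelta2 (t * (y - x)).val x
    rwa [hxy] at this
  have hm0 : (m : ℤ) • delta n 0 ∈ p := by
    have e0 : psi n m 0 = ∑ k ∈ Finset.range m, delta n ((k : ℕ) : ZMod n) := by
      have := hpsix 0
      rw [mul_zero] at this
      rw [this]
      refine Finset.sum_congr rfl fun k _ => ?_
      rw [zero_add]
    have he : (m : ℤ) • delta n 0 = psi n m 0 - ∑ k ∈ Finset.range m, (delta n ((k : ℕ) : ZMod n) - delta n 0) := by
      rw [e0, ← Finset.sum_sub_distrib]
      have : ∀ k ∈ Finset.range m, (delta n ((k : ℕ) : ZMod n) - (delta n ((k : ℕ) : ZMod n) - delta n 0)) = delta n 0 := by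
        intro k _; abel
      rw [Finset.sum_congr rfl this, Finset.sum_const, Finset.card_range,
        ← Nat.cast_smul_eq_nsmul ℤ]
    rw [he]
    exact p.sub_mem (hpsi 0) (Submodule.sum_mem _ fun k _ => hdelta3 _ _)
  have hn0 : (n : ℤ) • delta n 0 ∈ p := by
    have he : (n : ℤ) • delta n 0 = (fun _ => (1 : ℤ)) - ∑ x : ZMod n, (delta n x - delta n 0) := by
      rw [← delta_sum, ← Finset.sum_sub_distrib]
      have : ∀ x ∈ (Finset.univ : Finset (ZMod n)), (delta n x - (delta n x - delta n 0)) = delta n 0 := by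
        intro x _; abel
      rw [Finset.sum_congr rfl this, Finset.sum_const, Finset.card_univ, ZMod.card,
        ← Nat.cast_smul_eq_nsmul ℤ]
    rw [he]
    exact p.sub_mem h1 (Submodule.sum_mem _ fun x _ => hdelta3 _ _)
  have hd0 : delta n 0 ∈ p := by
    have hg : (1 : ℤ) = (m : ℤ) * Nat.gcdA m n + (n : ℤ) * Nat.gcdB m n := by
      have hb := Nat.gcd_eq_gcd_ab m n
      rw [hc] at hb
      exact_mod_cast hb
    have he : delta n 0 = Nat.gcdA m n • ((m : ℤ) • delta n 0) + Nat.gcdB m n • ((n : ℤ) • delta n 0) := by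
      rw [smul_smul, smul_smul, ← add_smul, mul_comm (Nat.gcdA m n), mul_comm (Nat.gcdB m n), ← hg, one_smul]
    rw [he]
    exact p.add_mem (p.smul_mem _ hm0) (p.smul_mem _ hn0)
  have hd : ∀ x : ZMod n, delta n x ∈ p := by
    intro x
    have := p.sub_mem hd0 (hdelta3 0 x)
    simpa using this
  have hall : ∀ v : Fin n → ℤ, v ∈ p := by
    intro v
    rw [pi_eq_sum_univ v]
    refine Submodule.sum_mem _ fun i _ => p.smul_mem _ ?_
    have he : (fun j => if i = j then (1 : ℤ) else 0) = delta n ((i : ℕ) : ZMod n) := by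
      funext j
      simp only [delta]
      congr 1
      apply propext
      rw [cast_inj_fin]
      exact eq_comm
    rw [he]
    exact hd _
  have hsurj : ∀ w : Fin n → ℤ, ∃ v, (Bz n m).mulVec v = w := by
    intro w
    obtain ⟨v, hv⟩ := hall w
    exact ⟨v, hv⟩
  set X : Matrix (Fin n) (Fin n) ℤ := Matrix.of fun i j => (hsurj (Pi.single j 1)).choose i with hX
  have hBX : Bz n m * X = 1 := by
    ext i j
    have hspec := (hsurj (Pi.single j 1)).choose_spec
    have : (Bz n m * X) i j = ((Bz n m).mulVec fun k => X k j) i := by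
      simp [Matrix.mul_apply, Matrix.mulVec, dotProduct]
    rw [this]
    have hXj : (fun k => X k j) = (hsurj (Pi.single j 1)).choose := rfl
    rw [hXj, hspec, Matrix.one_apply, Pi.single_apply]
  exact IsUnit.of_mul_eq_one X.det (by rw [← Matrix.det_mul, hBX, Matrix.det_one])


lemma card_val_lt (hmn : m ≤ n) :
    (Finset.univ.filter fun x : ZMod n => x.val < m).card = m := by
  have key : (Finset.univ.filter fun x : ZMod n => x.val < m).card = (Finset.range m).card := by
    refine Finset.card_nbij' (fun x => x.val) (fun k => (k : ZMod n)) ?_ ?_ ?_ ?_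
    · intro x hx
      simp only [Finset.mem_coe, Finset.mem_filter] at hx
      exact Finset.mem_range.mpr hx.2
    · intro k hk
      simp only [Finset.mem_coe, Finset.mem_filter, Finset.mem_univ, true_and]
      rw [ZMod.val_cast_of_lt (lt_of_lt_of_le (Finset.mem_range.mp hk) hmn)]
      exact Finset.mem_range.mp hk
    · intro x _
      exact ZMod.natCast_rightInverse x
    · intro k hk
      exact ZMod.val_cast_of_lt (lt_of_lt_of_le (Finset.mem_range.mp hk) hmn)
  rw [key, Finset.card_range]

lemma card_filter_comp {α β : Type*} [Fintype α] [Fintype β] [DecidableEq β]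
    (f : α → β) (hf : Function.Bijective f) (Q : β → Prop) [DecidablePred Q] :
    (Finset.univ.filter fun a => Q (f a)).card = (Finset.univ.filter Q).card := by
  refine Finset.card_nbij f ?_ ?_ ?_
  · intro a ha
    simp only [Finset.mem_coe, Finset.mem_filter, Finset.mem_univ, true_and] at ha ⊢
    exact ha
  · intro a1 _ a2 _ h
    exact hf.1 h
  · intro b hb
    obtain ⟨a, rfl⟩ := hf.2 b
    simp only [Finset.coe_filter, Finset.mem_univ, true_and, Set.mem_setOf_eq] at hb ⊢
    exact ⟨a, hb, rfl⟩

lemma row_card {t : ZMod n} (hmt : (m : ZMod n) * t = 1) (hmn : m < n) (i : Fin n) :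
    (Finset.univ.filter fun k : Fin n =>
      (((i : ℕ) : ZMod n) - (m : ZMod n) * ((k : ℕ) : ZMod n)).val < m).card = m := by
  have hbij : Function.Bijective
      (fun k : Fin n => ((i : ℕ) : ZMod n) - (m : ZMod n) * ((k : ℕ) : ZMod n)) := by
    rw [Function.bijective_iff_has_inverse]
    refine ⟨fun y => toF (t * (((i : ℕ) : ZMod n) - y)), fun k => ?_, fun y => ?_⟩
    · show toF (t * (((i : ℕ) : ZMod n) - (((i : ℕ) : ZMod n) - (m : ZMod n) * ((k : ℕ) : ZMod n)))) = k
      have : t * (((i : ℕ) : ZMod n) - (((i : ℕ) : ZMod n) - (m : ZMod n) * ((k : ℕ) : ZMod n)))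
          = ((k : ℕ) : ZMod n) := by
        linear_combination ((k : ℕ) : ZMod n) * hmt
      rw [this, toF_cast]
    · show ((i : ℕ) : ZMod n) - (m : ZMod n) * (((toF (t * (((i : ℕ) : ZMod n) - y)) : Fin n) : ℕ) : ZMod n) = y
      rw [cast_toF]
      linear_combination (y - ((i : ℕ) : ZMod n)) * hmt
  rw [card_filter_comp _ hbij (fun x : ZMod n => x.val < m)]
  exact card_val_lt hmn.le

end ChristoffelAux

open ChristoffelAux

theorem christoffel_det (R : Type*) [CommRing R] [IsDomain R]
    (n m : ℕ) (hn : 2 ≤ n) (hm : 1 ≤ m) (hm' : m < n) (hc : Nat.Coprime m n)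
    (a b : R) (hab : a ≠ b) :
    ((christoffel n m a b).det = ((m : R) * a + ((n : R) - (m : R)) * b) * (a - b) ^ (n - 1) ∨
      (christoffel n m a b).det = -(((m : R) * a + ((n : R) - (m : R)) * b) * (a - b) ^ (n - 1))) ∧
    (IsUnit (christoffel n m a b).det → (m : R) * a + ((n : R) - (m : R)) * b ≠ 0) := by
  classical
  haveI : NeZero n := ⟨by omega⟩
  set s : R := (m : R) * a + ((n : R) - (m : R)) * b with hs
  set u : (ZMod n)ˣ := ZMod.unitOfCoprime m hc with hu
  set t : ZMod n := ((u⁻¹ : (ZMod n)ˣ) : ZMod n) with ht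
  have hmt : (m : ZMod n) * t = 1 := by
    rw [ht, ← ZMod.coe_unitOfCoprime m hc, ← hu]
    exact u.mul_inv
  set M : Matrix (Fin n) (Fin n) R := christoffel n m a b with hM
  set F : Matrix (Fin n) (Fin n) R :=
    Matrix.of fun k j => if j = 0 then (1 : R) else if k = j then 1 else 0 with hF
  set E : Matrix (Fin n) (Fin n) R :=
    Matrix.of fun k j => if k = j then (if j = 0 then s else 1) else if k = 0 then b else 0 with hE
  set Bm : Matrix (Fin n) (Fin n) R :=
    Matrix.of fun i j => (if j = 0 then (1 : R) else a - b) *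
      ((Bz n m).map (Int.cast : ℤ → R)) i j with hBm
  have hBm00 : ∀ i : Fin n, Bm i 0 = 1 := by
    intro i
    simp [hBm, Bz]
  have hrow : ∀ i : Fin n, (∑ k : Fin n, M i k) = s := by
    intro i
    have hsplit : (∑ k : Fin n, M i k)
        = (Finset.univ.filter fun k : Fin n =>
            (((i : ℕ) : ZMod n) - (m : ZMod n) * ((k : ℕ) : ZMod n)).val < m).card • a
          + (Finset.univ.filter fun k : Fin n =>
            ¬ ((((i : ℕ) : ZMod n) - (m : ZMod n) * ((k : ℕ) : ZMod n)).val < m)).card • b := by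
      rw [show (∑ k : Fin n, M i k) = ∑ k : Fin n,
          (if (((i : ℕ) : ZMod n) - (m : ZMod n) * ((k : ℕ) : ZMod n)).val < m then a else b)
        from Finset.sum_congr rfl fun k _ => rfl]
      rw [Finset.sum_ite, Finset.sum_const, Finset.sum_const]
    have hc1 := row_card hmt hm' i
    have hc2 : (Finset.univ.filter fun k : Fin n =>
        ¬ ((((i : ℕ) : ZMod n) - (m : ZMod n) * ((k : ℕ) : ZMod n)).val < m)).card = n - m := by
      have := Finset.card_filter_add_card_filter_not (s := (Finset.univ : Finset (Fin n)))
        (p := fun k : Fin n => (((i : ℕ) : ZMod n) - (m : ZMod n) * ((k : ℕ) : ZMod n)).val < m)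
      rw [Finset.card_univ, Fintype.card_fin, hc1] at this
      omega
    rw [hsplit, hc1, hc2, nsmul_eq_mul, nsmul_eq_mul, hs, Nat.cast_sub hm'.le]
  have key1 : M * F = Bm * E := by
    ext i j
    rw [Matrix.mul_apply, Matrix.mul_apply]
    by_cases hj : j = 0
    · subst hj
      have hL : (∑ k : Fin n, M i k * F k 0) = s := by
        rw [show (∑ k : Fin n, M i k * F k 0) = ∑ k : Fin n, M i k from
          Finset.sum_congr rfl fun k _ => by simp [hF]]
        exact hrow i
      have hR : (∑ k : Fin n, Bm i k * E k 0) = s := by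
        rw [show (∑ k : Fin n, Bm i k * E k 0)
            = ∑ k : Fin n, (if k = 0 then Bm i k * s else 0) from
          Finset.sum_congr rfl fun k _ => by
            by_cases hk : k = 0 <;> simp [hE, hk]]
        rw [Finset.sum_ite_eq' Finset.univ (0 : Fin n) (fun k => Bm i k * s)]
        simp [hBm00]
      rw [hL, hR]
    · have hL : (∑ k : Fin n, M i k * F k j) = M i j := by
        rw [show (∑ k : Fin n, M i k * F k j)
            = ∑ k : Fin n, (if k = j then M i k else 0) from
          Finset.sum_congr rfl fun k _ => by
            by_cases hk : k = j <;> simp [hF, hk, hj]]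
        rw [Finset.sum_ite_eq' Finset.univ j (fun k => M i k)]
        simp
      have hR : (∑ k : Fin n, Bm i k * E k j) = Bm i j + b := by
        rw [show (∑ k : Fin n, Bm i k * E k j)
            = ∑ k : Fin n, ((if k = j then Bm i k else 0) + (if k = 0 then b else 0)) from
          Finset.sum_congr rfl fun k _ => by
            by_cases hk : k = j
            · subst hk
              simp [hE, hj]
            · by_cases hk0 : k = 0
              · subst hk0
                simp [hE, Ne.symm hj, hk, hBm00]
              · simp [hE, hk, hk0]]
        rw [Finset.sum_add_distrib,
          Finset.sum_ite_eq' Finset.univ j (fun k => Bm i k),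
          Finset.sum_ite_eq' Finset.univ (0 : Fin n) (fun _ => b)]
        simp
      rw [hL, hR]
      have hBmij : Bm i j = (a - b) *
          (if (((i : ℕ) : ZMod n) - (m : ZMod n) * ((j : ℕ) : ZMod n)).val < m then 1 else 0) := by
        simp only [hBm, Matrix.of_apply, if_neg hj, Matrix.map_apply, Bz, psi]
        by_cases hcond : (((i : ℕ) : ZMod n) - (m : ZMod n) * ((j : ℕ) : ZMod n)).val < m <;>
          simp [hcond]
      have hMij : M i j =
          (if (((i : ℕ) : ZMod n) - (m : ZMod n) * ((j : ℕ) : ZMod n)).val < m then a else b) := rfl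
      rw [hBmij, hMij]
      by_cases hcond : (((i : ℕ) : ZMod n) - (m : ZMod n) * ((j : ℕ) : ZMod n)).val < m
      · rw [if_pos hcond, if_pos hcond, mul_one]
        ring
      · rw [if_neg hcond, if_neg hcond, mul_zero, zero_add]
  have hdetF : F.det = 1 := by
    have htri : F.BlockTriangular OrderDual.toDual := by
      intro k j h
      have hkj : k < j := h
      have h1 : (k : ℕ) < (j : ℕ) := hkj
      have hj0 : j ≠ 0 := by
        intro h0
        subst h0
        simp at h1
      simp [hF, hj0, Fin.ne_of_lt hkj]
    rw [Matrix.det_of_lowerTriangular F htri]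
    refine Finset.prod_eq_one fun k _ => ?_
    by_cases hk : k = 0 <;> simp [hF, hk]
  have hdetE : E.det = s := by
    have htri : E.BlockTriangular id := by
      intro k j h
      have hkj : j < k := h
      have h1 : (j : ℕ) < (k : ℕ) := hkj
      have hk0 : k ≠ 0 := by
        intro h0
        subst h0
        simp at h1
      simp [hE, hk0, Fin.ne_of_gt hkj]
    rw [Matrix.det_of_upperTriangular htri]
    have : ∀ k : Fin n, E k k = if k = 0 then s else 1 := by
      intro k
      simp [hE]
    rw [Finset.prod_congr rfl fun k _ => this k,
      Finset.prod_ite_eq' Finset.univ (0 : Fin n) (fun _ => s)]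
    simp
  have hdetBm : Bm.det = (a - b) ^ (n - 1) * (((Bz n m).det : ℤ) : R) := by
    rw [hBm, Matrix.det_mul_row (fun j : Fin n => if j = 0 then (1 : R) else a - b)]
    have hprod : (∏ j : Fin n, (if j = 0 then (1 : R) else a - b)) = (a - b) ^ (n - 1) := by
      rw [← Finset.mul_prod_erase Finset.univ _ (Finset.mem_univ (0 : Fin n))]
      rw [if_pos rfl, one_mul]
      rw [Finset.prod_congr rfl (fun j hj => if_neg (Finset.ne_of_mem_erase hj))]
      rw [Finset.prod_const, Finset.card_erase_of_mem (Finset.mem_univ _), Finset.card_univ,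
        Fintype.card_fin]
    have hmap : (((Bz n m).map (Int.cast : ℤ → R)).det) = (((Bz n m).det : ℤ) : R) := by
      have := RingHom.map_det (Int.castRingHom R) (Bz n m)
      rw [RingHom.mapMatrix_apply] at this
      exact this.symm
    rw [hprod, hmap]
  have hdet : M.det = s * ((a - b) ^ (n - 1) * (((Bz n m).det : ℤ) : R)) := by
    have h1 : M.det * F.det = Bm.det * E.det := by
      rw [← Matrix.det_mul, ← Matrix.det_mul, key1]
    rw [hdetF, mul_one, hdetE, hdetBm] at h1
    rw [h1]
    ring
  obtain hd | hd := Int.isUnit_iff.mp (isUnit_det_Bz hm hm' hc)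
  constructor
  · left
    rw [hdet, hd]
    push_cast
    ring
  · intro hu0 h0
    rw [hdet, h0, zero_mul] at hu0
    exact hu0.ne_zero rfl
  constructor
  · right
    rw [hdet, hd]
    push_cast
    ring
  · intro hu0 h0
    rw [hdet, h0, zero_mul] at hu0
    exact hu0.ne_zero rfl
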